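/- Let G be a powerful finite p-group with p odd, and let N ≤ L be subgroups of G with G^p ≤ N. Then for every i ≥ 0 one has |L^{p^i} : N^{p^i}| ≤ |L : N|, and if L/N is generated by the images of x_1, …, x_n ∈ L, then L^{p^i}/N^{p^i} is generated by the images of x_1^{p^i}, …, x_n^{p^i}. -/

import Mathlib

/-!
STATEMENT 18: Let G be a powerful finite p-group with p odd, and let N ≤ L be
subgroups of G with G^p ≤ N.  Then for every i ≥ 0 one has
|L^{p^i} : N^{p^i}| ≤ |L : N|, and if L/N is generated by the images of
x_1, …, x_n ∈ L, then L^{p^i}/N^{p^i} is generated by the images of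
x_1^{p^i}, …, x_n^{p^i}.

Here `sgPow H m = ⟨h^m : h ∈ H⟩` (so G^p = sgPow ⊤ p), "G powerful" means
G' ≤ G^p, |A : B| for B ≤ A is `B.relindex A`, "L/N is generated by the images
of the x_j" means L = ⟨x_1, …, x_n⟩ ⊔ N, and likewise for the conclusion.
-/

/-- The subgroup `⟨h^n : h ∈ H⟩` generated by the `n`-th powers of elements of `H`. -/
def sgPow {G : Type*} [Group G] (H : Subgroup G) (n : ℕ) : Subgroup G :=
  Subgroup.closure ((· ^ n) '' (H : Set G))


namespace PowerfulAux

open Subgroup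
open scoped commutatorElement

variable {G : Type*} [Group G]

theorem sgPow_le_sgPow {H K : Subgroup G} (h : H ≤ K) (n : ℕ) : sgPow H n ≤ sgPow K n :=
  Subgroup.closure_mono (Set.image_mono h)

theorem pow_mem_sgPow {H : Subgroup G} {a : G} (ha : a ∈ H) (n : ℕ) : a ^ n ∈ sgPow H n :=
  Subgroup.subset_closure ⟨a, ha, rfl⟩

theorem sgPow_le {H : Subgroup G} {K : Subgroup G} (n : ℕ)
    (h : ∀ a ∈ H, a ^ n ∈ K) : sgPow H n ≤ K := by
  apply Subgroup.closure_le _ |>.mpr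
  rintro _ ⟨a, ha, rfl⟩
  exact h a ha

theorem sgPow_le_self (H : Subgroup G) (n : ℕ) : sgPow H n ≤ H :=
  sgPow_le n fun a ha => pow_mem ha n

theorem sgPow_one (H : Subgroup G) : sgPow H 1 = H := by
  apply le_antisymm (sgPow_le 1 (by simp))
  intro a ha
  simpa using pow_mem_sgPow ha 1

theorem sgPow_normal {H : Subgroup G} (hH : H.Normal) (n : ℕ) : (sgPow H n).Normal := by
  constructor
  intro a ha g
  have hsub : (MulAut.conj g).toMonoidHom '' ((· ^ n) '' (H : Set G)) ⊆ ((· ^ n) '' (H : Set G)) := by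
    rintro _ ⟨_, ⟨b, hb, rfl⟩, rfl⟩
    exact ⟨g * b * g⁻¹, hH.conj_mem b hb g, by simp [map_pow]⟩
  have h2 : (sgPow H n).map (MulAut.conj g).toMonoidHom ≤ sgPow H n := by
    rw [sgPow, MonoidHom.map_closure]
    exact Subgroup.closure_le _ |>.mpr (hsub.trans Subgroup.subset_closure)
  exact h2 ⟨a, ha, rfl⟩

theorem normal_of_commutator_le {N : Subgroup G} (h : commutator G ≤ N) : N.Normal := by
  constructor
  intro a ha g
  have h1 : ⁅g, a⁆ ∈ N := h (Subgroup.commutator_mem_commutator (mem_top g) (mem_top a))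
  have h2 := mul_mem h1 ha
  simpa [commutatorElement_def, mul_assoc] using h2

/-- class-2 commutator collection identity -/
theorem mul_pow_class2 {u v z : G} (hz : z = ⁅v, u⁆) (h1 : Commute z u) (h2 : Commute z v) :
    ∀ k : ℕ, (u * v) ^ k = u ^ k * v ^ k * z ^ Nat.choose k 2 := by
  have hvu : v * u = z * (u * v) := by rw [hz]; group
  have key : ∀ k : ℕ, v ^ k * u = z ^ k * (u * v ^ k) := by
    intro k
    induction k with
    | zero => simp
    | succ k ih =>
      calc v ^ (k + 1) * u = v ^ k * (v * u) := by rw [pow_succ, mul_assoc]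
        _ = v ^ k * (z * (u * v)) := by rw [hvu]
        _ = (v ^ k * z) * (u * v) := by group
        _ = (z * v ^ k) * (u * v) := by rw [(h2.pow_right k).eq]
        _ = z * ((v ^ k * u) * v) := by group
        _ = z * ((z ^ k * (u * v ^ k)) * v) := by rw [ih]
        _ = (z * z ^ k) * (u * (v ^ k * v)) := by group
        _ = z ^ (k + 1) * (u * v ^ (k + 1)) := by
            rw [((Commute.refl z).pow_right k).eq, ← pow_succ z, ← pow_succ v]
  intro k
  induction k with
  | zero => simp
  | succ k ih =>
    have hchoose : (k + 1).choose 2 = k.choose 2 + k := by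
      rw [Nat.choose_succ_succ]
      simp [Nat.choose_one_right, Nat.add_comm]
    calc (u * v) ^ (k + 1) = (u * v) ^ k * (u * v) := by rw [pow_succ]
      _ = u ^ k * v ^ k * z ^ k.choose 2 * (u * v) := by rw [ih]
      _ = u ^ k * v ^ k * ((z ^ k.choose 2 * u) * v) := by group
      _ = u ^ k * v ^ k * ((u * z ^ k.choose 2) * v) := by rw [(h1.pow_left _).eq]
      _ = u ^ k * (v ^ k * u) * (z ^ k.choose 2 * v) := by group
      _ = u ^ k * (v ^ k * u) * (v * z ^ k.choose 2) := by rw [(h2.pow_left _).eq]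
      _ = u ^ k * (z ^ k * (u * v ^ k)) * (v * z ^ k.choose 2) := by rw [key]
      _ = (u ^ k * z ^ k) * (u * (v ^ k * v)) * z ^ k.choose 2 := by group
      _ = (z ^ k * u ^ k) * (u * (v ^ k * v)) * z ^ k.choose 2 := by
          rw [((h1.pow_left k).pow_right k).symm.eq]
      _ = z ^ k * (u ^ k * u) * ((v ^ k * v) * z ^ k.choose 2) := by group
      _ = z ^ k * u ^ (k + 1) * (z ^ k.choose 2 * v ^ (k + 1)) := by
          rw [← pow_succ u, ← pow_succ v, ((h2.pow_left _).pow_right (k+1)).symm.eq]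
      _ = (z ^ k * z ^ k.choose 2) * (u ^ (k + 1) * v ^ (k + 1)) := by
          have h := ((h1.pow_left (k.choose 2)).pow_right (k+1)).eq
          calc z ^ k * u ^ (k + 1) * (z ^ k.choose 2 * v ^ (k + 1))
              = z ^ k * (u ^ (k + 1) * z ^ k.choose 2) * v ^ (k + 1) := by group
            _ = z ^ k * (z ^ k.choose 2 * u ^ (k + 1)) * v ^ (k + 1) := by rw [← h]
            _ = (z ^ k * z ^ k.choose 2) * (u ^ (k + 1) * v ^ (k + 1)) := by group
      _ = u ^ (k + 1) * v ^ (k + 1) * z ^ (k + 1).choose 2 := by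
          rw [← pow_add, hchoose, Nat.add_comm k (k.choose 2)]
          exact (((h1.pow_left _).pow_right _).mul_right
            ((h2.pow_left _).pow_right _)).eq

theorem commutator_pow_eq {a b : G} (k : ℕ) : ⁅a ^ k, b⁆ = a ^ k * (a⁻¹ * ⁅a, b⁆) ^ k := by
  have h1 : a⁻¹ * ⁅a, b⁆ = b * a⁻¹ * b⁻¹ := by group
  have h2 : (b * a⁻¹ * b⁻¹) ^ k = b * a⁻¹ ^ k * b⁻¹ := by
    induction k with
    | zero => simp
    | succ k ih => rw [pow_succ, ih, pow_succ]; group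
  rw [h1, h2, commutatorElement_def, inv_pow]
  group

section Quot

variable (M : Subgroup G) [M.Normal]

theorem mk_commutator (a b : G) : ((⁅a, b⁆ : G) : G ⧸ M) = ⁅(a : G ⧸ M), (b : G ⧸ M)⁆ := by
  simp [commutatorElement_def]

theorem commute_mod_of_commutator_mem {a b : G} (h : ⁅a, b⁆ ∈ M) :
    Commute (a : G ⧸ M) (b : G ⧸ M) := by
  rw [← commutatorElement_eq_one_iff_commute, ← mk_commutator, QuotientGroup.eq_one_iff]
  exact h

/-- If the relevant commutators are trivial mod `M`, then `(x*y)^k ≡ x^k y^k mod M`. -/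
theorem pow_mul_pow_mem {x y : G} (k : ℕ)
    (hzx : ⁅⁅y, x⁆, x⁆ ∈ M) (hzy : ⁅⁅y, x⁆, y⁆ ∈ M) (hzc : ⁅y, x⁆ ^ k.choose 2 ∈ M) :
    ((x * y) ^ k)⁻¹ * (x ^ k * y ^ k) ∈ M := by
  rw [← QuotientGroup.eq]
  have h1 : Commute ((⁅y, x⁆ : G) : G ⧸ M) (x : G ⧸ M) := commute_mod_of_commutator_mem M hzx
  have h2 : Commute ((⁅y, x⁆ : G) : G ⧸ M) (y : G ⧸ M) := commute_mod_of_commutator_mem M hzy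
  have key := mul_pow_class2 (mk_commutator M y x) h1 h2 k
  have hz1 : ((⁅y, x⁆ : G) : G ⧸ M) ^ k.choose 2 = 1 := by
    rw [← QuotientGroup.mk_pow, QuotientGroup.eq_one_iff]
    exact hzc
  calc ((x * y) ^ k : G) = ((x : G ⧸ M) * y) ^ k := by
        rw [← QuotientGroup.mk_mul, QuotientGroup.mk_pow]
    _ = (x : G ⧸ M) ^ k * (y : G ⧸ M) ^ k * ((⁅y, x⁆ : G) : G ⧸ M) ^ k.choose 2 := key
    _ = ((x ^ k * y ^ k : G) : G ⧸ M) := by rw [hz1, mul_one, QuotientGroup.mk_mul,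
        QuotientGroup.mk_pow, QuotientGroup.mk_pow]

/-- If the relevant commutators are trivial mod `M`, then `⁅x^k, g⁆ ∈ M`. -/
theorem commutator_pow_mem {x g : G} (k : ℕ)
    (hc : ⁅x, g⁆ ^ k ∈ M)
    (hz1 : ⁅⁅⁅x, g⁆, x⁻¹⁆, x⁻¹⁆ ∈ M)
    (hz2 : ⁅⁅⁅x, g⁆, x⁻¹⁆, ⁅x, g⁆⁆ ∈ M)
    (hzc : ⁅⁅x, g⁆, x⁻¹⁆ ^ k.choose 2 ∈ M) :
    ⁅x ^ k, g⁆ ∈ M := by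
  rw [← QuotientGroup.eq_one_iff, mk_commutator, QuotientGroup.mk_pow]
  set u : G ⧸ M := (x : G ⧸ M)
  set v : G ⧸ M := (g : G ⧸ M)
  have hcmk : ((⁅x, g⁆ : G) : G ⧸ M) = ⁅u, v⁆ := mk_commutator M x g
  have hz : ((⁅⁅x, g⁆, x⁻¹⁆ : G) : G ⧸ M) = ⁅⁅u, v⁆, u⁻¹⁆ := by
    rw [mk_commutator, mk_commutator, QuotientGroup.mk_inv]
  have h1 : Commute (⁅⁅u, v⁆, u⁻¹⁆) u⁻¹ := by
    rw [← hz]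
    have := commute_mod_of_commutator_mem M hz1
    rw [QuotientGroup.mk_inv] at this
    exact this
  have h2 : Commute (⁅⁅u, v⁆, u⁻¹⁆) ⁅u, v⁆ := by
    rw [← hz, ← hcmk]
    exact commute_mod_of_commutator_mem M hz2
  have key := mul_pow_class2 (rfl : (⁅⁅u,v⁆,u⁻¹⁆ : G ⧸ M) = ⁅⁅u, v⁆, u⁻¹⁆) h1 h2 k
  have hck : (⁅u, v⁆ : G ⧸ M) ^ k = 1 := by
    rw [← hcmk, ← QuotientGroup.mk_pow, QuotientGroup.eq_one_iff]; exact hc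
  have hzk : (⁅⁅u, v⁆, u⁻¹⁆ : G ⧸ M) ^ k.choose 2 = 1 := by
    rw [← hz, ← QuotientGroup.mk_pow, QuotientGroup.eq_one_iff]; exact hzc
  calc ⁅u ^ k, v⁆ = u ^ k * (u⁻¹ * ⁅u, v⁆) ^ k := commutator_pow_eq k
    _ = u ^ k * ((u⁻¹) ^ k * ⁅u, v⁆ ^ k * ⁅⁅u, v⁆, u⁻¹⁆ ^ k.choose 2) := by rw [key]
    _ = 1 := by rw [hck, hzk, inv_pow]; group

end Quot



theorem forall_commutator_mem_of_closure {M : Subgroup G} [hMn : M.Normal] {S : Set G}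
    (hS : ∀ s ∈ S, ∀ w : G, ⁅s, w⁆ ∈ M) : ∀ a ∈ Subgroup.closure S, ∀ w : G, ⁅a, w⁆ ∈ M := by
  intro a ha
  induction ha using Subgroup.closure_induction with
  | mem x hx => exact hS x hx
  | one => intro w; rw [show ⁅(1 : G), w⁆ = 1 by group]; exact one_mem M
  | mul x y hx hy ihx ihy =>
    intro w
    rw [show ⁅x * y, w⁆ = (x * ⁅y, w⁆ * x⁻¹) * ⁅x, w⁆ by group]
    exact mul_mem (hMn.conj_mem _ (ihy w) x) (ihx w)
  | inv x hx ih =>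
    intro w
    rw [show ⁅x⁻¹, w⁆ = x⁻¹ * ⁅x, w⁆⁻¹ * (x⁻¹)⁻¹ by group]
    exact hMn.conj_mem _ (inv_mem (ih w)) x⁻¹

theorem sup_eq_closure_union (A B : Subgroup G) :
    A ⊔ B = Subgroup.closure ((A : Set G) ∪ (B : Set G)) := by
  rw [Subgroup.closure_union, Subgroup.closure_eq, Subgroup.closure_eq]

section Vseries

variable {p : ℕ}

def Vse (p : ℕ) {G : Type*} [Group G] : ℕ → Subgroup G
  | 0 => ⊤
  | (i+1) => sgPow (Vse p i) p

theorem Vse_zero : (Vse p 0 : Subgroup G) = ⊤ := rfl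

theorem Vse_succ (i : ℕ) : (Vse p (i+1) : Subgroup G) = sgPow (Vse p i) p := rfl

theorem Vse_normal : ∀ i, (Vse p i : Subgroup G).Normal := by
  intro i
  induction i with
  | zero =>
    have : (⊤ : Subgroup G).Normal := inferInstance
    exact this
  | succ i ih => exact sgPow_normal ih p

theorem Vse_succ_le (i : ℕ) : (Vse p (i+1) : Subgroup G) ≤ Vse p i :=
  sgPow_le_self _ p

theorem pow_mem_Vse {a : G} {i : ℕ} (ha : a ∈ (Vse p i : Subgroup G)) (m : ℕ) :
    a ^ (p ^ m) ∈ (Vse p (i + m) : Subgroup G) := by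
  induction m with
  | zero => simpa using ha
  | succ m ih =>
    have h : a ^ p ^ (m + 1) = (a ^ p ^ m) ^ p := by
      rw [← pow_mul, pow_succ]
    rw [h, ← Nat.add_assoc, Vse_succ]
    exact pow_mem_sgPow ih p

theorem two_lt_of_odd_prime (hp : p.Prime) (hodd : Odd p) : 2 < p := by
  rcases Nat.lt_or_ge 2 p with h | h
  · exact h
  · interval_cases p
    · exact absurd hp (by norm_num)
    · exact absurd hp (by norm_num)
    · exact absurd hodd (by decide)

section Main

variable [Finite G] (hp : p.Prime) (hodd : Odd p) (hG : IsPGroup p G)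

include hp hG in
theorem sgPow_eq_self_imp_bot {K : Subgroup G} (hKn : K.Normal) (h : sgPow K p = K) :
    K = ⊥ := by
  haveI : Fact p.Prime := ⟨hp⟩
  obtain ⟨n, hn⟩ := IsPGroup.iff_card.mp hG
  haveI := hKn
  haveI : (⁅K, K⁆ : Subgroup G).Normal := Subgroup.commutator_normal K K
  set M : Subgroup G := ⁅K, K⁆ with hM
  have claim1 : ∀ b ∈ K, ∃ c ∈ K, (b : G ⧸ M) = (c : G ⧸ M) ^ p := by
    intro b hb
    rw [← h] at hb
    have hb' : b ∈ Subgroup.closure ((· ^ p) '' (K : Set G)) := hb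
    clear hb
    induction hb' using Subgroup.closure_induction with
    | mem x hx =>
      obtain ⟨c, hc, rfl⟩ := hx
      exact ⟨c, hc, by rw [QuotientGroup.mk_pow]⟩
    | one => exact ⟨1, one_mem K, by simp⟩
    | mul a b _ _ iha ihb =>
      obtain ⟨c, hc, hac⟩ := iha
      obtain ⟨d, hd, hbd⟩ := ihb
      refine ⟨c * d, mul_mem hc hd, ?_⟩
      have hcomm : Commute ((c : G) : G ⧸ M) ((d : G) : G ⧸ M) :=
        commute_mod_of_commutator_mem M (Subgroup.commutator_mem_commutator hc hd)
      rw [QuotientGroup.mk_mul, hac, hbd, QuotientGroup.mk_mul, hcomm.mul_pow]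
    | inv a _ iha =>
      obtain ⟨c, hc, hac⟩ := iha
      exact ⟨c⁻¹, inv_mem hc, by rw [QuotientGroup.mk_inv, hac, QuotientGroup.mk_inv, inv_pow]⟩
  have claim2 : ∀ m : ℕ, ∀ a ∈ K, ∃ b ∈ K, (a : G ⧸ M) = (b : G ⧸ M) ^ (p ^ m) := by
    intro m
    induction m with
    | zero => exact fun a ha => ⟨a, ha, by simp⟩
    | succ m ih =>
      intro a ha
      obtain ⟨b, hb, hab⟩ := ih a ha
      obtain ⟨c, hc, hbc⟩ := claim1 b hb
      refine ⟨c, hc, ?_⟩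
      rw [hab, hbc, ← pow_mul, ← pow_succ']
  have hKM : K ≤ M := by
    intro a ha
    obtain ⟨b, _, hab⟩ := claim2 n a ha
    rw [← QuotientGroup.eq_one_iff, hab, ← QuotientGroup.mk_pow, ← hn,
      pow_card_eq_one', QuotientGroup.mk_one]
  have hlcs : ∀ j, K ≤ (⊤ : Subgroup G).lowerCentralSeries j := by
    intro j
    induction j with
    | zero => exact le_top
    | succ j ih =>
      rw [Subgroup.lowerCentralSeries_succ]
      exact hKM.trans (Subgroup.commutator_mono ih le_top)
  obtain ⟨j, hj⟩ := Subgroup.nilpotent_iff_lowerCentralSeries.mp hG.isNilpotent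
  exact le_bot_iff.mp (hj ▸ hlcs j)

include hp hG in
theorem exists_Vse_bot : ∃ k, (Vse p k : Subgroup G) = ⊥ := by
  by_contra hcon
  push_neg at hcon
  have hlt : ∀ k, Nat.card (Vse p (k+1) : Subgroup G) < Nat.card (Vse p k : Subgroup G) := by
    intro k
    have hne : (Vse p (k+1) : Subgroup G) ≠ Vse p k := by
      intro heq
      exact hcon k (sgPow_eq_self_imp_bot hp hG (Vse_normal k) heq)
    have hss : ((Vse p (k+1) : Subgroup G) : Set G) ⊂ ((Vse p k : Subgroup G) : Set G) := by
      rw [Set.ssubset_iff_subset_ne]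
      exact ⟨Vse_succ_le k, fun hs => hne (SetLike.coe_injective hs)⟩
    have hcard := Set.Finite.card_lt_card (Set.toFinite _) hss
    exact hcard
  have hdesc : ∀ k, Nat.card (Vse p k : Subgroup G) + k ≤ Nat.card (Vse p 0 : Subgroup G) := by
    intro k
    induction k with
    | zero => simp
    | succ k ih =>
      have := hlt k
      omega
  have := hdesc (Nat.card (Vse p 0 : Subgroup G) + 1)
  omega

include hp hodd hG in
theorem Vse_pe (hpow : commutator G ≤ sgPow (⊤ : Subgroup G) p) :
    ∀ i, ⁅(Vse p i : Subgroup G), (⊤ : Subgroup G)⁆ ≤ Vse p (i + 1) := by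
  haveI : Fact p.Prime := ⟨hp⟩
  obtain ⟨t, ht⟩ : p ∣ Nat.choose p 2 :=
    hp.dvd_choose_self (by norm_num) (two_lt_of_odd_prime hp hodd)
  obtain ⟨k₀, hk₀⟩ := Subgroup.nilpotent_iff_lowerCentralSeries.mp hG.isNilpotent
  intro i
  induction i with
  | zero => exact hpow
  | succ i ih =>
    haveI hNn : (Vse p (i+1) : Subgroup G).Normal := Vse_normal (i+1)
    set N : Subgroup G := Vse p (i+1) with hN
    let K : ℕ → Subgroup G := fun j => Nat.rec ⁅N, (⊤ : Subgroup G)⁆ (fun _ ihh => ⁅ihh, ⊤⁆) j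
    have hKsucc : ∀ j, K (j+1) = ⁅K j, ⊤⁆ := fun j => rfl
    have hKnormal : ∀ j, (K j).Normal := by
      intro j
      induction j with
      | zero => exact Subgroup.commutator_normal N ⊤
      | succ j ihj => exact @Subgroup.commutator_normal _ _ (K j) ⊤ ihj _
    have hKlcs : ∀ j, K j ≤ (⊤ : Subgroup G).lowerCentralSeries (j+1) := by
      intro j
      induction j with
      | zero =>
        rw [Subgroup.lowerCentralSeries_succ, Subgroup.lowerCentralSeries_zero]
        exact Subgroup.commutator_mono le_top le_top
      | succ j ihj =>
        rw [Subgroup.lowerCentralSeries_succ]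
        exact Subgroup.commutator_mono ihj le_top
    have main : ∀ j, ⁅N, (⊤ : Subgroup G)⁆ ≤ sgPow N p ⊔ K j := by
      intro j
      induction j with
      | zero => exact le_sup_right
      | succ j ihj =>
        haveI hMn : (sgPow N p ⊔ K (j+1)).Normal :=
          @Subgroup.sup_normal _ _ _ _ (sgPow_normal hNn p) (hKnormal (j+1))
        set M : Subgroup G := sgPow N p ⊔ K (j+1) with hM
        have hCm : ∀ a ∈ sgPow N p ⊔ K j, ∀ w : G, ⁅a, w⁆ ∈ M := by
          intro a ha w
          rw [sup_eq_closure_union] at ha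
          refine forall_commutator_mem_of_closure ?_ a ha w
          rintro s (hs | hs) v
          · have hsM : s ∈ M := Subgroup.mem_sup_left hs
            rw [show ⁅s, v⁆ = (s * v * s⁻¹ * v⁻¹ * s) * s⁻¹ by group]
            have h1 : v * s⁻¹ * v⁻¹ ∈ M := by
              have := hMn.conj_mem _ (inv_mem hsM) v
              simpa using this
            have h2 : s * (v * s⁻¹ * v⁻¹) ∈ M := mul_mem hsM h1
            rw [show s * v * s⁻¹ * v⁻¹ * s * s⁻¹ = s * (v * s⁻¹ * v⁻¹) by group]
            exact h2
          · exact Subgroup.mem_sup_right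
              (hKsucc j ▸ Subgroup.commutator_mem_commutator hs (Subgroup.mem_top v))
        have key : ∀ a ∈ N, ∀ g : G, ⁅a, g⁆ ∈ M := by
          intro a ha
          have ha' : a ∈ Subgroup.closure ((· ^ p) '' ((Vse p i : Subgroup G) : Set G)) := ha
          clear ha
          induction ha' using Subgroup.closure_induction with
          | mem x hx =>
            obtain ⟨x, hxV, rfl⟩ := hx
            intro g
            have hcN : ⁅x, g⁆ ∈ N :=
              ih (Subgroup.commutator_mem_commutator hxV (Subgroup.mem_top g))
            have hz₀NT : ⁅⁅x, g⁆, x⁻¹⁆ ∈ ⁅N, (⊤ : Subgroup G)⁆ :=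
              Subgroup.commutator_mem_commutator hcN (Subgroup.mem_top x⁻¹)
            have hle : (⁅N, (⊤ : Subgroup G)⁆ : Subgroup G) ≤ N := @Subgroup.commutator_le_left G _ N ⊤ hNn
            have hz₀N : ⁅⁅x, g⁆, x⁻¹⁆ ∈ N := hle hz₀NT
            have hz₀C := ihj hz₀NT
            refine commutator_pow_mem M p ?_ ?_ ?_ ?_
            · exact Subgroup.mem_sup_left (pow_mem_sgPow hcN p)
            · exact hCm _ hz₀C _
            · exact hCm _ hz₀C _
            · rw [ht, pow_mul]
              exact Subgroup.mem_sup_left (pow_mem (pow_mem_sgPow hz₀N p) t)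
          | one => intro g; rw [show ⁅(1 : G), g⁆ = 1 by group]; exact one_mem M
          | mul x y hx hy ihx ihy =>
            intro g
            rw [show ⁅x * y, g⁆ = (x * ⁅y, g⁆ * x⁻¹) * ⁅x, g⁆ by group]
            exact mul_mem (hMn.conj_mem _ (ihy g) x) (ihx g)
          | inv x hx ihx =>
            intro g
            rw [show ⁅x⁻¹, g⁆ = x⁻¹ * ⁅x, g⁆⁻¹ * (x⁻¹)⁻¹ by group]
            exact hMn.conj_mem _ (inv_mem (ihx g)) x⁻¹
        exact Subgroup.commutator_le.mpr fun a ha g _ => key a ha g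
    have hKbot : K k₀ = ⊥ := by
      have h1 : K k₀ ≤ (⊤ : Subgroup G).lowerCentralSeries (k₀ + 1) := hKlcs k₀
      have h2 : (⊤ : Subgroup G).lowerCentralSeries (k₀ + 1) = ⊥ := by
        rw [Subgroup.lowerCentralSeries_succ, hk₀]
        simp [Subgroup.commutator_def]
      exact le_bot_iff.mp (h2 ▸ h1)
    have := main k₀
    rw [hKbot, sup_bot_eq] at this
    exact this


omit [Finite G] in
theorem Vse_le_of_le {i j : ℕ} (h : i ≤ j) : (Vse p j : Subgroup G) ≤ Vse p i := by
  induction j with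
  | zero => simp_all
  | succ j ih =>
    rcases Nat.eq_or_lt_of_le h with h1 | h1
    · rw [h1]
    · exact (Vse_succ_le j).trans (ih (Nat.lt_succ_iff.mp h1))

include hp hodd in
theorem mul_pow_mem_aux {M A B : Subgroup G} [M.Normal] {u v : G}
    (hu : u ∈ A) (hv : v ∈ A)
    (h1 : ⁅A, (⊤ : Subgroup G)⁆ ≤ B)
    (h2 : ⁅B, (⊤ : Subgroup G)⁆ ≤ M)
    (h3 : sgPow B p ≤ M) :
    ((u * v) ^ p)⁻¹ * (u ^ p * v ^ p) ∈ M := by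
  obtain ⟨t, ht⟩ : p ∣ Nat.choose p 2 :=
    hp.dvd_choose_self (by norm_num) (two_lt_of_odd_prime hp hodd)
  have hz₀ : ⁅v, u⁆ ∈ B := h1 (Subgroup.commutator_mem_commutator hv (Subgroup.mem_top u))
  refine pow_mul_pow_mem M p ?_ ?_ ?_
  · exact h2 (Subgroup.commutator_mem_commutator hz₀ (Subgroup.mem_top u))
  · exact h2 (Subgroup.commutator_mem_commutator hz₀ (Subgroup.mem_top v))
  · rw [ht, pow_mul]
    exact pow_mem (h3 (pow_mem_sgPow hz₀ p)) t

include hp hodd hG in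
theorem Vse_le_sgPow_pow (hpow : commutator G ≤ sgPow (⊤ : Subgroup G) p) :
    ∀ i m : ℕ, (Vse p (i + m) : Subgroup G) ≤ sgPow (Vse p i) (p ^ m) := by
  obtain ⟨k, hk⟩ := exists_Vse_bot hp hG (G := G)
  have hpe := Vse_pe hp hodd hG hpow
  suffices H : ∀ tt i, k ≤ i + tt → ∀ m, (Vse p (i + m) : Subgroup G) ≤ sgPow (Vse p i) (p ^ m) by
    intro i m
    exact H k i (Nat.le_add_left k i) m
  intro tt
  induction tt with
  | zero =>
    intro i hi m
    cases m with
    | zero =>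
      rw [pow_zero, sgPow_one]
      exact le_of_eq rfl
    | succ m =>
      have hbot : (Vse p (i + (m + 1)) : Subgroup G) ≤ Vse p k := Vse_le_of_le (by omega)
      rw [hk] at hbot
      exact (le_bot_iff.mp hbot) ▸ bot_le
  | succ tt ihtt =>
    intro i hi m
    induction m with
    | zero =>
      rw [pow_zero, sgPow_one]
      exact le_of_eq rfl
    | succ m ihm =>
      haveI hMn : (sgPow (Vse p i : Subgroup G) (p ^ (m + 1))).Normal :=
        sgPow_normal (Vse_normal i) _
      set M : Subgroup G := sgPow (Vse p i) (p ^ (m + 1)) with hMdef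
      have hWsub : (Vse p (i + m + 2) : Subgroup G) ≤ M := by
        have h1 : (Vse p (i + 1 + (m + 1)) : Subgroup G) ≤ sgPow (Vse p (i + 1)) (p ^ (m + 1)) :=
          ihtt (i + 1) (by omega) (m + 1)
        have h2 : sgPow (Vse p (i + 1) : Subgroup G) (p ^ (m + 1)) ≤ M :=
          sgPow_le_sgPow (Vse_succ_le i) _
      -- i + m + 2 = i + 1 + (m + 1)
        have heq : i + m + 2 = i + 1 + (m + 1) := by omega
        rw [heq]
        exact h1.trans h2
      have hstep : (Vse p (i + (m + 1)) : Subgroup G) = sgPow (Vse p (i + m)) p :=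
        Vse_succ (i + m)
      have hsub : sgPow (Vse p (i + m) : Subgroup G) p ≤ sgPow (sgPow (Vse p i) (p ^ m)) p :=
        sgPow_le_sgPow (ihm) p
      rw [hstep]
      refine hsub.trans ?_
      apply sgPow_le
      intro a ha
      have ha' : a ∈ Subgroup.closure ((· ^ p ^ m) '' ((Vse p i : Subgroup G) : Set G)) := ha
      clear ha
      have key : a ∈ (Vse p (i + m) : Subgroup G) ∧ a ^ p ∈ M := by
        induction ha' using Subgroup.closure_induction with
        | mem x hx =>
          obtain ⟨c, hc, rfl⟩ := hx
          constructor
          · exact pow_mem_Vse hc m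
          · have : (c ^ p ^ m) ^ p = c ^ p ^ (m + 1) := by rw [← pow_mul, ← pow_succ]
            rw [this]
            exact pow_mem_sgPow hc (p ^ (m + 1))
        | one => exact ⟨one_mem _, by rw [one_pow]; exact one_mem M⟩
        | mul u v _ _ ihu ihv =>
          refine ⟨mul_mem ihu.1 ihv.1, ?_⟩
          have hd : ((u * v) ^ p)⁻¹ * (u ^ p * v ^ p) ∈ M := by
            refine mul_pow_mem_aux hp hodd (A := Vse p (i + m)) (B := Vse p (i + m + 1))
              ihu.1 ihv.1 (hpe (i + m)) ((hpe (i + m + 1)).trans ?_) ?_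
            · have : i + m + 1 + 1 = i + m + 2 := rfl
              rw [this]
              exact hWsub
            · rw [← Vse_succ]
              exact hWsub
          have : (u * v) ^ p = (u ^ p * v ^ p) * (((u * v) ^ p)⁻¹ * (u ^ p * v ^ p))⁻¹ := by group
          rw [this]
          exact mul_mem (mul_mem ihu.2 ihv.2) (inv_mem hd)
        | inv u _ ihu =>
          exact ⟨inv_mem ihu.1, by rw [inv_pow]; exact inv_mem ihu.2⟩
      exact key.2

include hp hodd hG in
theorem Vse_eq (hpow : commutator G ≤ sgPow (⊤ : Subgroup G) p) (i : ℕ) :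
    (Vse p i : Subgroup G) = sgPow ⊤ (p ^ i) := by
  apply le_antisymm
  · have h := Vse_le_sgPow_pow hp hodd hG hpow 0 i
    rwa [Nat.zero_add, Vse_zero] at h
  · apply sgPow_le
    intro a _
    have := pow_mem_Vse (p := p) (i := 0) (a := a) (by rw [Vse_zero]; trivial) i
    rwa [Nat.zero_add] at this


section Wlevel

variable (hpow : commutator G ≤ sgPow (⊤ : Subgroup G) p)

include hp hodd hG hpow in
theorem pe_W (i : ℕ) :
    ⁅sgPow (⊤ : Subgroup G) (p ^ i), (⊤ : Subgroup G)⁆ ≤ sgPow ⊤ (p ^ (i + 1)) := by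
  rw [← Vse_eq hp hodd hG hpow i, ← Vse_eq hp hodd hG hpow (i + 1)]
  exact Vse_pe hp hodd hG hpow i

include hp hodd hG hpow in
theorem sgPow_top_succ (i : ℕ) :
    sgPow (sgPow (⊤ : Subgroup G) (p ^ i)) p = sgPow ⊤ (p ^ (i + 1)) := by
  rw [← Vse_eq hp hodd hG hpow i, ← Vse_eq hp hodd hG hpow (i + 1)]
  exact (Vse_succ i).symm

omit [Finite G] in
theorem W_pow_le {N : Subgroup G} {j i : ℕ} (h : sgPow (⊤ : Subgroup G) (p ^ j) ≤ N) :
    sgPow (⊤ : Subgroup G) (p ^ (j + i)) ≤ sgPow N (p ^ i) := by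
  apply sgPow_le
  intro a _
  have h1 : a ^ p ^ (j + i) = (a ^ p ^ j) ^ p ^ i := by rw [← pow_mul, ← pow_add]
  rw [h1]
  exact pow_mem_sgPow (h (pow_mem_sgPow (Subgroup.mem_top a) _)) _

omit [Finite G] in
theorem W_succ_le_W (i : ℕ) :
    sgPow (⊤ : Subgroup G) (p ^ (i + 1)) ≤ sgPow (⊤ : Subgroup G) (p ^ i) := by
  have h := W_pow_le (p := p) (N := (⊤ : Subgroup G)) (j := 1) (i := i) le_top
  rwa [Nat.add_comm] at h

include hp hodd hG hpow in
theorem mul_pow_step {M : Subgroup G} [M.Normal] {i : ℕ}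
    (hW2 : sgPow (⊤ : Subgroup G) (p ^ (i + 2)) ≤ M) {u v : G}
    (hu : u ∈ sgPow (⊤ : Subgroup G) (p ^ i)) (hv : v ∈ sgPow (⊤ : Subgroup G) (p ^ i)) :
    ((u * v) ^ p)⁻¹ * (u ^ p * v ^ p) ∈ M := by
  refine mul_pow_mem_aux hp hodd hu hv (pe_W hp hodd hG hpow i)
    ((pe_W hp hodd hG hpow (i + 1)).trans hW2) ?_
  rw [sgPow_top_succ hp hodd hG hpow (i + 1)]
  exact hW2

include hp hodd hG hpow in
theorem sgPow_collapse {N : Subgroup G} (hGN : sgPow (⊤ : Subgroup G) p ≤ N) (i : ℕ) :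
    sgPow (sgPow N (p ^ i)) p = sgPow N (p ^ (i + 1)) := by
  have hNn : N.Normal := normal_of_commutator_le (hpow.trans hGN)
  haveI hMn : (sgPow N (p ^ (i + 1))).Normal := sgPow_normal hNn _
  apply le_antisymm
  · have hWM : sgPow (⊤ : Subgroup G) (p ^ (i + 2)) ≤ sgPow N (p ^ (i + 1)) := by
      have h := W_pow_le (p := p) (N := N) (j := 1) (i := i + 1)
        (show sgPow (⊤ : Subgroup G) (p ^ 1) ≤ N by rwa [pow_one])
      rwa [show 1 + (i + 1) = i + 2 by omega] at h
    apply sgPow_le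
    intro a ha
    have ha' : a ∈ Subgroup.closure ((· ^ p ^ i) '' (N : Set G)) := ha
    clear ha
    have key : a ∈ sgPow (⊤ : Subgroup G) (p ^ i) ∧ a ^ p ∈ sgPow N (p ^ (i + 1)) := by
      induction ha' using Subgroup.closure_induction with
      | mem x hx =>
        obtain ⟨n, hn, rfl⟩ := hx
        refine ⟨pow_mem_sgPow (Subgroup.mem_top n) _, ?_⟩
        have h1 : (n ^ p ^ i) ^ p = n ^ p ^ (i + 1) := by rw [← pow_mul, ← pow_succ]
        rw [h1]
        exact pow_mem_sgPow hn _
      | one => exact ⟨one_mem _, by rw [one_pow]; exact one_mem _⟩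
      | mul u v _ _ ihu ihv =>
        refine ⟨mul_mem ihu.1 ihv.1, ?_⟩
        have hd := mul_pow_step hp hodd hG hpow hWM ihu.1 ihv.1
        rw [show (u * v) ^ p = (u ^ p * v ^ p) * (((u * v) ^ p)⁻¹ * (u ^ p * v ^ p))⁻¹ by group]
        exact mul_mem (mul_mem ihu.2 ihv.2) (inv_mem hd)
      | inv u _ ihu =>
        exact ⟨inv_mem ihu.1, by rw [inv_pow]; exact inv_mem ihu.2⟩
    exact key.2
  · apply sgPow_le
    intro n hn
    have h1 : n ^ p ^ (i + 1) = (n ^ p ^ i) ^ p := by rw [← pow_mul, ← pow_succ]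
    rw [h1]
    exact pow_mem_sgPow (pow_mem_sgPow hn _) p

include hp hodd hG hpow in
theorem step_s2 {N₁ : Subgroup G} (hN₁n : N₁.Normal) {i : ℕ}
    (hW1 : sgPow (⊤ : Subgroup G) (p ^ (i + 1)) ≤ N₁) {x y : G}
    (hx : x ∈ sgPow (⊤ : Subgroup G) (p ^ i)) (hy : y ∈ sgPow (⊤ : Subgroup G) (p ^ i)) :
    ((x * y) ^ p)⁻¹ * (x ^ p * y ^ p) ∈ sgPow N₁ p := by
  haveI : (sgPow N₁ p).Normal := sgPow_normal hN₁n p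
  have hW2 : sgPow (⊤ : Subgroup G) (p ^ (i + 2)) ≤ sgPow N₁ p := by
    have h := W_pow_le (j := i + 1) (i := 1) hW1
    rwa [show i + 1 + 1 = i + 2 from rfl, pow_one] at h
  exact mul_pow_step hp hodd hG hpow hW2 hx hy

include hp hodd hG hpow in
theorem step_s1 {N₁ : Subgroup G} (hN₁n : N₁.Normal) {i : ℕ}
    (hW1 : sgPow (⊤ : Subgroup G) (p ^ (i + 1)) ≤ N₁)
    (hN₁W : N₁ ≤ sgPow (⊤ : Subgroup G) (p ^ i)) {x y : G}
    (hx : x ∈ sgPow (⊤ : Subgroup G) (p ^ i)) (hxy : x⁻¹ * y ∈ N₁) :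
    (x ^ p)⁻¹ * y ^ p ∈ sgPow N₁ p := by
  have hn : x⁻¹ * y ∈ sgPow (⊤ : Subgroup G) (p ^ i) := hN₁W hxy
  have hd := step_s2 hp hodd hG hpow hN₁n hW1 hx hn
  have hnp : (x⁻¹ * y) ^ p ∈ sgPow N₁ p := pow_mem_sgPow hxy p
  rw [show x * (x⁻¹ * y) = y by group] at hd
  rw [show (x ^ p)⁻¹ * y ^ p =
      (x⁻¹ * y) ^ p * ((y ^ p)⁻¹ * (x ^ p * (x⁻¹ * y) ^ p))⁻¹ by group]
  exact mul_mem hnp (inv_mem hd)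


omit [Finite G] in
theorem closure_sup_subgroup (S : Set G) (K : Subgroup G) :
    Subgroup.closure S ⊔ K = Subgroup.closure (S ∪ (K : Set G)) := by
  rw [Subgroup.closure_union, Subgroup.closure_eq]

include hp hodd hG hpow in
theorem ci_cm {N : Subgroup G} (hGN : sgPow (⊤ : Subgroup G) p ≤ N) : ∀ i : ℕ,
    (∀ x y : G, x⁻¹ * y ∈ N → (x ^ p ^ i)⁻¹ * y ^ p ^ i ∈ sgPow N (p ^ i)) ∧
    (∀ x y : G, ((x * y) ^ p ^ i)⁻¹ * (x ^ p ^ i * y ^ p ^ i) ∈ sgPow N (p ^ i)) := by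
  have hNn : N.Normal := normal_of_commutator_le (hpow.trans hGN)
  intro i
  induction i with
  | zero =>
    constructor
    · intro x y hxy
      rw [pow_zero, sgPow_one, pow_one, pow_one]
      exact hxy
    · intro x y
      rw [pow_zero, sgPow_one, pow_one, pow_one, pow_one]
      rw [show ((x * y))⁻¹ * (x * y) = 1 by group]
      exact one_mem N
  | succ i ih =>
    have hNin : (sgPow N (p ^ i)).Normal := sgPow_normal hNn _
    have hW1 : sgPow (⊤ : Subgroup G) (p ^ (i + 1)) ≤ sgPow N (p ^ i) := by
      have h := W_pow_le (p := p) (N := N) (j := 1) (i := i)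
        (show sgPow (⊤ : Subgroup G) (p ^ 1) ≤ N by rwa [pow_one])
      rwa [Nat.add_comm] at h
    have hNiW : sgPow N (p ^ i) ≤ sgPow (⊤ : Subgroup G) (p ^ i) := sgPow_le_sgPow le_top _
    have hcol := sgPow_collapse hp hodd hG hpow hGN i
    have hps : ∀ a : G, (a ^ p ^ i) ^ p = a ^ p ^ (i + 1) := fun a => by
      rw [← pow_mul, ← pow_succ]
    constructor
    · intro x y hxy
      have h1 := (ih.1) x y hxy
      have h2 := step_s1 hp hodd hG hpow hNin hW1 hNiW
        (pow_mem_sgPow (Subgroup.mem_top x) (p ^ i)) h1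
      rw [hcol, hps x, hps y] at h2
      exact h2
    · intro x y
      have h1 := (ih.2) x y
      have h2 := step_s1 hp hodd hG hpow hNin hW1 hNiW
        (pow_mem_sgPow (Subgroup.mem_top (x * y)) (p ^ i)) h1
      have h3 := step_s2 hp hodd hG hpow hNin hW1
        (pow_mem_sgPow (Subgroup.mem_top x) (p ^ i)) (pow_mem_sgPow (Subgroup.mem_top y) (p ^ i))
      rw [hcol] at h2 h3
      have h4 := mul_mem h2 h3
      rw [show (((x * y) ^ p ^ i) ^ p)⁻¹ * (x ^ p ^ i * y ^ p ^ i) ^ p *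
          (((x ^ p ^ i * y ^ p ^ i) ^ p)⁻¹ * ((x ^ p ^ i) ^ p * (y ^ p ^ i) ^ p)) =
        (((x * y) ^ p ^ i) ^ p)⁻¹ * ((x ^ p ^ i) ^ p * (y ^ p ^ i) ^ p) by group] at h4
      rw [hps, hps, hps] at h4
      exact h4

include hp hodd hG hpow in
theorem E_lemma : ∀ (i : ℕ) (U : Set G),
    sgPow (Subgroup.closure U ⊔ sgPow (⊤ : Subgroup G) p) (p ^ i) =
      Subgroup.closure ((· ^ p ^ i) '' U) ⊔ sgPow (⊤ : Subgroup G) (p ^ (i + 1)) := by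
  intro i
  induction i with
  | zero =>
    intro U
    have himg : ((· ^ (1 : ℕ)) '' U) = U := by
      ext a
      simp
    rw [pow_zero, sgPow_one, himg]
    norm_num
  | succ i ih =>
    intro U
    set H : Subgroup G := Subgroup.closure U ⊔ sgPow (⊤ : Subgroup G) p with hHdef
    have hHN : sgPow (⊤ : Subgroup G) p ≤ H := le_sup_right
    have hHi := ih U
    haveI hWn : (sgPow (⊤ : Subgroup G) (p ^ (i + 2))).Normal :=
      sgPow_normal (by infer_instance) _
    apply le_antisymm
    · have h1 : sgPow H (p ^ (i + 1)) ≤ sgPow (sgPow H (p ^ i)) p := by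
        apply sgPow_le
        intro h hh
        rw [show h ^ p ^ (i + 1) = (h ^ p ^ i) ^ p by rw [← pow_mul, ← pow_succ]]
        exact pow_mem_sgPow (pow_mem_sgPow hh _) p
      refine h1.trans ?_
      apply sgPow_le
      intro a ha
      rw [hHi, closure_sup_subgroup] at ha
      have key : a ∈ sgPow (⊤ : Subgroup G) (p ^ i) ∧
          a ^ p ∈ Subgroup.closure ((· ^ p ^ (i + 1)) '' U) ⊔ sgPow (⊤ : Subgroup G) (p ^ (i + 2)) := by
        induction ha using Subgroup.closure_induction with
        | mem s hs =>
          rcases hs with hs | hs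
          · obtain ⟨s₀, hs₀, rfl⟩ := hs
            refine ⟨pow_mem_sgPow (Subgroup.mem_top s₀) _, ?_⟩
            rw [show (s₀ ^ p ^ i) ^ p = s₀ ^ p ^ (i + 1) by rw [← pow_mul, ← pow_succ]]
            exact Subgroup.mem_sup_left (Subgroup.subset_closure ⟨s₀, hs₀, rfl⟩)
          · refine ⟨W_succ_le_W i hs, ?_⟩
            refine Subgroup.mem_sup_right ?_
            rw [← sgPow_top_succ hp hodd hG hpow (i + 1)]
            exact pow_mem_sgPow hs p
        | one => exact ⟨one_mem _, by rw [one_pow]; exact one_mem _⟩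
        | mul u v _ _ ihu ihv =>
          refine ⟨mul_mem ihu.1 ihv.1, ?_⟩
          have hd := mul_pow_step hp hodd hG hpow (M := sgPow (⊤ : Subgroup G) (p ^ (i + 2)))
            (le_refl _) ihu.1 ihv.1
          rw [show (u * v) ^ p = (u ^ p * v ^ p) * (((u * v) ^ p)⁻¹ * (u ^ p * v ^ p))⁻¹ by group]
          exact mul_mem (mul_mem ihu.2 ihv.2) (inv_mem (Subgroup.mem_sup_right hd))
        | inv u _ ihu =>
          exact ⟨inv_mem ihu.1, by rw [inv_pow]; exact inv_mem ihu.2⟩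
      exact key.2
    · apply sup_le
      · apply (Subgroup.closure_le _).mpr
        rintro _ ⟨s, hs, rfl⟩
        exact pow_mem_sgPow (Subgroup.mem_sup_left (Subgroup.subset_closure hs)) _
      · have h := W_pow_le (p := p) (N := H) (j := 1) (i := i + 1)
          (show sgPow (⊤ : Subgroup G) (p ^ 1) ≤ H by rwa [pow_one])
        rwa [show 1 + (i + 1) = i + 2 by omega] at h

include hp hodd hG hpow in
theorem set_decomp {N L : Subgroup G} (hGN : sgPow (⊤ : Subgroup G) p ≤ N) (hNL : N ≤ L)
    (i : ℕ) : ∀ a ∈ sgPow L (p ^ i), ∃ l ∈ L, (l ^ p ^ i)⁻¹ * a ∈ sgPow N (p ^ i) := by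
  have hNn : N.Normal := normal_of_commutator_le (hpow.trans hGN)
  haveI hN'n : (sgPow N (p ^ i)).Normal := sgPow_normal hNn _
  have hCM := (ci_cm hp hodd hG hpow hGN i).2
  intro a ha
  have ha' : a ∈ Subgroup.closure ((· ^ p ^ i) '' (L : Set G)) := ha
  clear ha
  induction ha' using Subgroup.closure_induction with
  | mem x hx =>
    obtain ⟨l, hl, rfl⟩ := hx
    exact ⟨l, hl, by rw [inv_mul_cancel]; exact one_mem _⟩
  | one => exact ⟨1, one_mem L, by simpa using one_mem (sgPow N (p ^ i))⟩
  | mul a b _ _ iha ihb =>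
    obtain ⟨l, hl, hla⟩ := iha
    obtain ⟨m, hm, hmb⟩ := ihb
    refine ⟨l * m, mul_mem hl hm, ?_⟩
    have hconj : (m ^ p ^ i)⁻¹ * ((l ^ p ^ i)⁻¹ * a) * ((m ^ p ^ i)⁻¹)⁻¹ ∈ sgPow N (p ^ i) :=
      hN'n.conj_mem _ hla ((m ^ p ^ i)⁻¹)
    have hd := hCM l m
    rw [show ((l * m) ^ p ^ i)⁻¹ * (a * b) =
      (((l * m) ^ p ^ i)⁻¹ * (l ^ p ^ i * m ^ p ^ i)) *
        ((m ^ p ^ i)⁻¹ * ((l ^ p ^ i)⁻¹ * a) * ((m ^ p ^ i)⁻¹)⁻¹) *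
        ((m ^ p ^ i)⁻¹ * b) by group]
    exact mul_mem (mul_mem hd hconj) hmb
  | inv a _ iha =>
    obtain ⟨l, hl, hla⟩ := iha
    refine ⟨l⁻¹, inv_mem hl, ?_⟩
    rw [show ((l⁻¹) ^ p ^ i)⁻¹ * a⁻¹ =
      (l ^ p ^ i) * ((l ^ p ^ i)⁻¹ * a)⁻¹ * (l ^ p ^ i)⁻¹ by rw [inv_pow]; group]
    exact hN'n.conj_mem _ (inv_mem hla) _


include hp hodd hG hpow in
theorem relindex_le_aux {N L : Subgroup G} (hGN : sgPow (⊤ : Subgroup G) p ≤ N) (hNL : N ≤ L)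
    (i : ℕ) : (sgPow N (p ^ i)).relIndex (sgPow L (p ^ i)) ≤ N.relIndex L := by
  have hCI := (ci_cm hp hodd hG hpow hGN i).1
  rw [Subgroup.relIndex, Subgroup.relIndex, Subgroup.index_eq_card, Subgroup.index_eq_card]
  have hmem : ∀ l : ↥L, (l : G) ^ p ^ i ∈ sgPow L (p ^ i) := fun l => pow_mem_sgPow l.2 _
  let g0 : ↥L → ↥(sgPow L (p ^ i)) := fun l => ⟨(l : G) ^ p ^ i, hmem l⟩
  have hwd : ∀ a b : ↥L,
      (QuotientGroup.leftRel (N.subgroupOf L)) a b →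
      (QuotientGroup.leftRel ((sgPow N (p ^ i)).subgroupOf (sgPow L (p ^ i)))) (g0 a) (g0 b) := by
    intro a b hab
    rw [QuotientGroup.leftRel_apply] at hab ⊢
    rw [Subgroup.mem_subgroupOf] at hab ⊢
    exact hCI (a : G) (b : G) hab
  refine Nat.card_le_card_of_surjective (Quotient.map' g0 hwd) ?_
  intro q
  obtain ⟨a, rfl⟩ := QuotientGroup.mk_surjective q
  obtain ⟨l, hl, hdec⟩ := set_decomp hp hodd hG hpow hGN hNL i (a : G) a.2
  refine ⟨QuotientGroup.mk (⟨l, hl⟩ : ↥L), ?_⟩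
  have hq : Quotient.map' g0 hwd (QuotientGroup.mk (⟨l, hl⟩ : ↥L)) =
      QuotientGroup.mk (g0 ⟨l, hl⟩) := rfl
  rw [hq, QuotientGroup.eq, Subgroup.mem_subgroupOf]
  exact hdec

include hp hodd hG hpow in
theorem generators_aux {N L : Subgroup G} (hGN : sgPow (⊤ : Subgroup G) p ≤ N) (hNL : N ≤ L)
    (i : ℕ) {α : Type*} (x : α → G) (hx : ∀ j, x j ∈ L)
    (hgen : L = Subgroup.closure (Set.range x) ⊔ N) :
    sgPow L (p ^ i) = Subgroup.closure (Set.range fun j => x j ^ p ^ i) ⊔ sgPow N (p ^ i) := by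
  have hW1 : sgPow (⊤ : Subgroup G) (p ^ (i + 1)) ≤ sgPow N (p ^ i) := by
    have h := W_pow_le (p := p) (N := N) (j := 1) (i := i)
      (show sgPow (⊤ : Subgroup G) (p ^ 1) ≤ N by rwa [pow_one])
    rwa [Nat.add_comm] at h
  have hLU : L = Subgroup.closure (Set.range x ∪ (N : Set G)) ⊔ sgPow (⊤ : Subgroup G) p := by
    rw [Subgroup.closure_union, Subgroup.closure_eq, sup_assoc, sup_eq_left.mpr hGN]
    exact hgen
  have hE := E_lemma hp hodd hG hpow i (Set.range x ∪ (N : Set G))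
  rw [← hLU] at hE
  have himgU : ((· ^ p ^ i) '' (Set.range x ∪ (N : Set G))) =
      ((· ^ p ^ i) '' Set.range x) ∪ ((· ^ p ^ i) '' (N : Set G)) := Set.image_union _ _ _
  rw [himgU, Subgroup.closure_union] at hE
  have hNpart : Subgroup.closure ((· ^ p ^ i) '' (N : Set G)) = sgPow N (p ^ i) := rfl
  rw [hNpart] at hE
  have himg : ((· ^ p ^ i) '' Set.range x) = Set.range (fun j => x j ^ p ^ i) := by
    ext a
    simp [Set.mem_image, Set.mem_range]
  rw [himg] at hE
  rw [sup_assoc, sup_eq_left.mpr hW1] at hE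
  exact hE

end Wlevel
end Main
end Vseries
end PowerfulAux

theorem powerful_relindex_and_generators
    {p : ℕ} (hp : p.Prime) (hodd : Odd p)
    {G : Type*} [Group G] [Finite G] (hG : IsPGroup p G)
    (hpow : commutator G ≤ sgPow (⊤ : Subgroup G) p)
    (N L : Subgroup G) (hGN : sgPow (⊤ : Subgroup G) p ≤ N) (hNL : N ≤ L) :
    (∀ i : ℕ, (sgPow N (p ^ i)).relIndex (sgPow L (p ^ i)) ≤ N.relIndex L) ∧
    (∀ (i n : ℕ) (x : Fin n → G), (∀ j, x j ∈ L) →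
      L = Subgroup.closure (Set.range x) ⊔ N →
      sgPow L (p ^ i) = Subgroup.closure (Set.range fun j => x j ^ p ^ i) ⊔ sgPow N (p ^ i)) := by
  constructor
  · intro i
    exact PowerfulAux.relindex_le_aux hp hodd hG hpow hGN hNL i
  · intro i n x hx hgen
    exact PowerfulAux.generators_aux hp hodd hG hpow hGN hNL i x hx hgen
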